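/- With P^(k) and β as above, define L^(k)_β = ⟨ [(I - βP^(k))^{-1}]_0 , d^(k) ⟩ and M^(k)_β = ⟨ [(I - βP^(k))^{-1}]_0 , 𝟏 ⟩, where d^(k) = (d(-k+1), ..., d(k-1)) with d even, increasing on ℤ≥0, d(0) = 0 and d(e) > 0 for e ≠ 0, and [·]_0 denotes row 0. Then L^(k)_β < L^(k+1)_β and M^(k)_β < M^(k+1)_β for all k ∈ ℤ>0. -/

import Mathlib

/-- Restriction of the Toeplitz matrix `P(i,j) = p(|i-j|)` to
`S^(k) = {-(k-1), …, k-1}`, indexed by `Fin (2k-1)` (index `i` corresponds to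
the integer `i - (k-1)`). -/
def Prestrict (p : ℕ → ℝ) (k : ℕ) : Matrix (Fin (2 * k - 1)) (Fin (2 * k - 1)) ℝ :=
  fun i j => p ((i.val : ℤ) - (j.val : ℤ)).natAbs

/-- The inner product `L^(k)_β = ⟨[(I - βP^(k))⁻¹]₀, d^(k)⟩`, where row 0 of the
`S^(k)`-indexed matrix is the row at `Fin` index `k-1`. -/
noncomputable def Lkβ (p : ℕ → ℝ) (d : ℤ → ℝ) (β : ℝ) (k : ℕ) (hk : 1 ≤ k) : ℝ :=
  ∑ j : Fin (2 * k - 1),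
    (1 - β • Prestrict p k)⁻¹ ⟨k - 1, by omega⟩ j * d ((j.val : ℤ) - ((k : ℤ) - 1))

/-- `M^(k)_β = ⟨[(I - βP^(k))⁻¹]₀, 𝟏⟩`. -/
noncomputable def Mkβ (p : ℕ → ℝ) (β : ℝ) (k : ℕ) (hk : 1 ≤ k) : ℝ :=
  ∑ j : Fin (2 * k - 1), (1 - β • Prestrict p k)⁻¹ ⟨k - 1, by omega⟩ j

attribute [local instance] Matrix.linftyOpNormedAddCommGroup Matrix.linftyOpNormedRing
  Matrix.linftyOpNormedSpace Matrix.linftyOpNormedAlgebra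

open Finset in
/-- entrywise nonneg of powers -/
lemma pow_entry_nonneg {n : Type*} [Fintype n] [DecidableEq n]
    {A : Matrix n n ℝ} (h : ∀ i j, 0 ≤ A i j) (t : ℕ) :
    ∀ i j, 0 ≤ (A ^ t) i j := by
  induction t with
  | zero => intro i j; rw [pow_zero]; by_cases hij : i = j <;> simp [Matrix.one_apply, hij]
  | succ t ih =>
    intro i j
    rw [pow_succ, Matrix.mul_apply]
    exact Finset.sum_nonneg fun l _ => mul_nonneg (ih i l) (h l j)

/-- monotonicity of powers under enlarging the matrix -/
lemma pow_entry_mono {n m : Type*} [Fintype n] [Fintype m] [DecidableEq n] [DecidableEq m]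
    (e : n ↪ m) {A : Matrix n n ℝ} {B : Matrix m m ℝ}
    (hA : ∀ i j, 0 ≤ A i j) (hB : ∀ i j, 0 ≤ B i j)
    (hAB : ∀ i j, A i j = B (e i) (e j)) (t : ℕ) :
    ∀ i j, (A ^ t) i j ≤ (B ^ t) (e i) (e j) := by
  induction t with
  | zero =>
    intro i j
    by_cases hij : i = j
    · simp [pow_zero, Matrix.one_apply, hij]
    · have : e i ≠ e j := fun h => hij (e.injective h)
      simp [pow_zero, Matrix.one_apply, hij, this]
  | succ t ih =>
    intro i j
    rw [pow_succ', pow_succ', Matrix.mul_apply, Matrix.mul_apply]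
    calc ∑ l, A i l * (A ^ t) l j
        ≤ ∑ l, B (e i) (e l) * (B ^ t) (e l) (e j) := by
          refine Finset.sum_le_sum fun l _ => ?_
          have h1 : A i l ≤ B (e i) (e l) := le_of_eq (hAB i l)
          exact mul_le_mul h1 (ih l j) (pow_entry_nonneg hA t l j)
            (hB (e i) (e l))
      _ = ∑ l ∈ Finset.univ.map e, B (e i) l * (B ^ t) l (e j) := by
          rw [Finset.sum_map]
      _ ≤ ∑ l, B (e i) l * (B ^ t) l (e j) := by
          refine Finset.sum_le_sum_of_subset_of_nonneg (Finset.subset_univ _) ?_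
          intro l _ _
          exact mul_nonneg (hB (e i) l) (pow_entry_nonneg hB t l (e j))

/-- one step extension of a path -/
lemma pow_single_step {m : Type*} [Fintype m] [DecidableEq m]
    {B : Matrix m m ℝ} (hB : ∀ i j, 0 ≤ B i j) (t : ℕ) (i l j : m) :
    (B ^ t) i l * B l j ≤ (B ^ (t + 1)) i j := by
  rw [pow_succ, Matrix.mul_apply]
  exact Finset.single_le_sum
    (fun c _ => mul_nonneg (pow_entry_nonneg hB t i c) (hB c j)) (Finset.mem_univ l)

section Repr

variable {p : ℕ → ℝ} {β : ℝ}

/-- row sums of the restricted matrix are at most 1 -/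
lemma row_sum_le_one (hp0 : ∀ n, 0 ≤ p n)
    (hrow : ∀ i : ℤ, HasSum (fun j : ℤ => p (i - j).natAbs) 1)
    (k : ℕ) (i : Fin (2 * k - 1)) :
    ∑ j : Fin (2 * k - 1), Prestrict p k i j ≤ 1 := by
  let e : Fin (2 * k - 1) ↪ ℤ :=
    ⟨fun j => (j : ℤ), fun a b h => Fin.val_injective (Int.ofNat_inj.mp h)⟩
  have h1 : ∑ j : Fin (2 * k - 1), Prestrict p k i j
      = ∑ z ∈ Finset.univ.map e, p ((i : ℤ) - z).natAbs := by
    rw [Finset.sum_map]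
    rfl
  rw [h1]
  exact sum_le_hasSum _ (fun z _ => hp0 _) (hrow (i : ℤ))

/-- the norm bound -/
lemma norm_lt_one (hp0 : ∀ n, 0 ≤ p n)
    (hrow : ∀ i : ℤ, HasSum (fun j : ℤ => p (i - j).natAbs) 1)
    (hβ : β ∈ Set.Ioo (0 : ℝ) 1) (k : ℕ) :
    ‖β • Prestrict p k‖ < 1 := by
  have hb0 : (0:ℝ) ≤ β := hβ.1.le
  have key : ∀ i : Fin (2 * k - 1),
      (∑ j, ‖(β • Prestrict p k) i j‖₊ : NNReal) ≤ β.toNNReal := by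
    intro i
    rw [← NNReal.coe_le_coe]
    push_cast
    have : ∑ j, ‖(β • Prestrict p k) i j‖ = β * ∑ j, Prestrict p k i j := by
      rw [Finset.mul_sum]
      refine Finset.sum_congr rfl fun j _ => ?_
      have : (β • Prestrict p k) i j = β * Prestrict p k i j := rfl
      rw [this, Real.norm_eq_abs]
      exact abs_of_nonneg (mul_nonneg hb0 (hp0 _))
    rw [this, Real.coe_toNNReal _ hb0]
    calc β * ∑ j, Prestrict p k i j ≤ β * 1 :=
          mul_le_mul_of_nonneg_left (row_sum_le_one hp0 hrow k i) hb0
      _ = β := mul_one β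
  have h2 : ‖β • Prestrict p k‖ ≤ β := by
    rw [Matrix.linfty_opNorm_def]
    have hs : (Finset.univ.sup fun i => ∑ j, ‖(β • Prestrict p k) i j‖₊) ≤ β.toNNReal :=
      Finset.sup_le fun i _ => key i
    calc ((Finset.univ.sup fun i => ∑ j, ‖(β • Prestrict p k) i j‖₊ : NNReal) : ℝ)
        ≤ (β.toNNReal : ℝ) := NNReal.coe_le_coe.mpr hs
      _ = β := Real.coe_toNNReal _ hb0
  exact lt_of_le_of_lt h2 hβ.2

end Repr

lemma entry_repr {p : ℕ → ℝ} {β : ℝ} (hp0 : ∀ n, 0 ≤ p n)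
    (hrow : ∀ i : ℤ, HasSum (fun j : ℤ => p (i - j).natAbs) 1)
    (hβ : β ∈ Set.Ioo (0 : ℝ) 1) (k : ℕ) (i j : Fin (2 * k - 1)) :
    HasSum (fun t : ℕ => ((β • Prestrict p k) ^ t) i j)
      ((1 - β • Prestrict p k)⁻¹ i j) := by
  haveI : CompleteSpace (Matrix (Fin (2 * k - 1)) (Fin (2 * k - 1)) ℝ) :=
    FiniteDimensional.complete ℝ _
  set A := β • Prestrict p k with hAdef
  have hA : ‖A‖ < 1 := norm_lt_one hp0 hrow hβ k
  have hsum : Summable (fun t : ℕ => A ^ t) := summable_geometric_of_norm_lt_one hA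
  have hinv : (1 - A)⁻¹ = ∑' t : ℕ, A ^ t :=
    Matrix.inv_eq_right_inv (mul_neg_geom_series A hA)
  have hent : ∀ M : Matrix (Fin (2 * k - 1)) (Fin (2 * k - 1)) ℝ, ‖M i j‖ ≤ ‖M‖ := by
    intro M
    rw [Matrix.linfty_opNorm_def]
    calc ‖M i j‖ ≤ ∑ j', ‖M i j'‖ :=
          Finset.single_le_sum (fun c _ => norm_nonneg _) (Finset.mem_univ j)
      _ = ((∑ j', ‖M i j'‖₊ : NNReal) : ℝ) := by push_cast; rfl
      _ ≤ ((Finset.univ.sup fun i' => ∑ j', ‖M i' j'‖₊ : NNReal) : ℝ) :=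
          NNReal.coe_le_coe.mpr (Finset.le_sup (f := fun i' => ∑ j', ‖M i' j'‖₊) (Finset.mem_univ i))
  let E : Matrix (Fin (2 * k - 1)) (Fin (2 * k - 1)) ℝ →L[ℝ] ℝ :=
    LinearMap.mkContinuous
      { toFun := fun M => M i j, map_add' := fun _ _ => rfl, map_smul' := fun _ _ => rfl } 1
      (fun M => by rw [one_mul]; exact hent M)
  have h := hsum.hasSum.mapL E
  rw [hinv]
  exact h

lemma path_lb {p : ℕ → ℝ} {β : ℝ} (hp0 : ∀ n, 0 ≤ p n) (hβ0 : 0 ≤ β) (k : ℕ) :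
    ∀ t, ∀ ht : t ≤ k, (β * p 1) ^ t ≤
      ((β • Prestrict p (k + 1)) ^ t) ⟨k, by omega⟩ ⟨k + t, by omega⟩ := by
  have hB : ∀ i j, 0 ≤ (β • Prestrict p (k + 1)) i j := fun i j =>
    mul_nonneg hβ0 (hp0 _)
  intro t
  induction t with
  | zero => intro _; simp [Matrix.one_apply]
  | succ t ih =>
    intro ht
    have ht' : t ≤ k := by omega
    have hstep : (β • Prestrict p (k + 1)) ⟨k + t, by omega⟩ ⟨k + (t + 1), by omega⟩
        = β * p 1 := by
      have h1 : (((k + t : ℕ) : ℤ) - ((k + (t + 1) : ℕ) : ℤ)).natAbs = 1 := by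
        push_cast; omega
      show β • (p ((((k + t : ℕ) : ℤ)) - (((k + (t + 1) : ℕ) : ℤ))).natAbs) = β * p 1
      rw [h1, smul_eq_mul]
    calc (β * p 1) ^ (t + 1) = (β * p 1) ^ t * (β * p 1) := pow_succ _ _
      _ ≤ ((β • Prestrict p (k + 1)) ^ t) ⟨k, by omega⟩ ⟨k + t, by omega⟩ *
            ((β • Prestrict p (k + 1)) ⟨k + t, by omega⟩ ⟨k + (t + 1), by omega⟩) := by
          rw [hstep]
          exact mul_le_mul_of_nonneg_right (ih ht') (mul_nonneg hβ0 (hp0 _))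
      _ ≤ ((β • Prestrict p (k + 1)) ^ (t + 1)) ⟨k, by omega⟩ ⟨k + (t + 1), by omega⟩ :=
          pow_single_step hB t _ _ _

set_option maxHeartbeats 2000000 in
lemma Lk_lt (p : ℕ → ℝ) (d : ℤ → ℝ) (β : ℝ) (k : ℕ) (hk : 1 ≤ k)
    (hp0 : ∀ n, 0 ≤ p n) (hp1 : 0 < p 1)
    (hrow : ∀ i : ℤ, HasSum (fun j : ℤ => p (i - j).natAbs) 1)
    (hβ : β ∈ Set.Ioo (0 : ℝ) 1)
    (hd0 : ∀ e, 0 ≤ d e) (hdk : 0 < d (k : ℤ)) :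
    Lkβ p d β k hk < Lkβ p d β (k + 1) (Nat.le_add_left 1 k) := by
  set A := β • Prestrict p k with hAdef
  set B := β • Prestrict p (k + 1) with hBdef
  have hA0 : ∀ i j, 0 ≤ A i j := fun i j => mul_nonneg hβ.1.le (hp0 _)
  have hB0 : ∀ i j, 0 ≤ B i j := fun i j => mul_nonneg hβ.1.le (hp0 _)
  let e : Fin (2 * k - 1) ↪ Fin (2 * (k + 1) - 1) :=
    ⟨fun j => ⟨j + 1, by omega⟩, fun a b h => by
      apply Fin.val_injective
      have := congrArg Fin.val h
      simpa using this⟩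
  have hAB : ∀ i j, A i j = B (e i) (e j) := by
    intro i j
    show β • p (((i.val : ℤ) - (j.val : ℤ)).natAbs)
      = β • p ((((i.val + 1 : ℕ) : ℤ) - ((j.val + 1 : ℕ) : ℤ)).natAbs)
    congr 2
    push_cast
    omega
  let r : Fin (2 * k - 1) := ⟨k - 1, by omega⟩
  let r' : Fin (2 * (k + 1) - 1) := ⟨k, by omega⟩
  have hr : e r = r' := by
    apply Fin.val_injective
    show (k - 1) + 1 = k
    omega
  let f : ℕ → ℝ := fun t => ∑ j : Fin (2 * k - 1),
    (A ^ t) r j * d ((j.val : ℤ) - ((k : ℤ) - 1))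
  let g : ℕ → ℝ := fun t => ∑ j : Fin (2 * (k + 1) - 1),
    (B ^ t) r' j * d ((j.val : ℤ) - (((k + 1 : ℕ) : ℤ) - 1))
  have hf : HasSum f (Lkβ p d β k hk) :=
    hasSum_sum fun j _ => (entry_repr hp0 hrow hβ k r j).mul_right _
  have hg : HasSum g (Lkβ p d β (k + 1) (by omega)) :=
    hasSum_sum fun j _ => (entry_repr hp0 hrow hβ (k + 1) r' j).mul_right _
  have hd_arg : ∀ j : Fin (2 * k - 1),
      d ((j.val : ℤ) - ((k : ℤ) - 1)) = d (((e j).val : ℤ) - (((k + 1 : ℕ) : ℤ) - 1)) := by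
    intro j
    congr 1
    show (j.val : ℤ) - ((k : ℤ) - 1) = ((j.val + 1 : ℕ) : ℤ) - (((k + 1 : ℕ) : ℤ) - 1)
    push_cast
    ring
  have hle_map : ∀ t, f t ≤ ∑ j' ∈ Finset.univ.map e,
      (B ^ t) r' j' * d ((j'.val : ℤ) - (((k + 1 : ℕ) : ℤ) - 1)) := by
    intro t
    rw [Finset.sum_map]
    refine Finset.sum_le_sum fun j _ => ?_
    rw [hd_arg j]
    have h1 : (A ^ t) r j ≤ (B ^ t) r' (e j) := by
      have h2 := pow_entry_mono e hA0 hB0 hAB t r j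
      rwa [hr] at h2
    exact mul_le_mul_of_nonneg_right h1 (hd0 _)
  have hmap_le_g : ∀ t, (∑ j' ∈ Finset.univ.map e,
      (B ^ t) r' j' * d ((j'.val : ℤ) - (((k + 1 : ℕ) : ℤ) - 1))) ≤ g t := by
    intro t
    refine Finset.sum_le_sum_of_subset_of_nonneg (Finset.subset_univ _) fun j' _ _ =>
      mul_nonneg (pow_entry_nonneg hB0 t r' j') (hd0 _)
  have hle : ∀ t, f t ≤ g t := fun t => (hle_map t).trans (hmap_le_g t)
  -- strictness at t = k
  have hstrict : f k < g k := by
    set j0 : Fin (2 * (k + 1) - 1) := ⟨2 * k, by omega⟩ with hj0def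
    have hj0 : j0 ∉ Finset.univ.map e := by
      simp only [Finset.mem_map, Finset.mem_univ, true_and]
      rintro ⟨j, hj⟩
      have := congrArg Fin.val hj
      simp only [e, Function.Embedding.coeFn_mk, j0] at this
      have hj' : j.val + 1 = 2 * k := congrArg Fin.val hj
      have := j.isLt
      omega
    have hterm : 0 < (B ^ k) r' j0 * d ((j0.val : ℤ) - (((k + 1 : ℕ) : ℤ) - 1)) := by
      have h1 : (β * p 1) ^ k ≤ (B ^ k) r' j0 := by
        have := path_lb hp0 hβ.1.le k k le_rfl
        have hidx : (⟨k + k, by omega⟩ : Fin (2 * (k + 1) - 1)) = j0 := by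
          apply Fin.val_injective; show k + k = 2 * k; omega
        rwa [hidx] at this
      have h2 : d ((j0.val : ℤ) - (((k + 1 : ℕ) : ℤ) - 1)) = d (k : ℤ) := by
        congr 1
        show ((2 * k : ℕ) : ℤ) - (((k + 1 : ℕ) : ℤ) - 1) = (k : ℤ)
        push_cast
        ring
      rw [h2]
      exact mul_pos (lt_of_lt_of_le (pow_pos (mul_pos hβ.1 hp1) k) h1) hdk
    calc f k ≤ ∑ j' ∈ Finset.univ.map e,
          (B ^ k) r' j' * d ((j'.val : ℤ) - (((k + 1 : ℕ) : ℤ) - 1)) := hle_map k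
      _ < (B ^ k) r' j0 * d ((j0.val : ℤ) - (((k + 1 : ℕ) : ℤ) - 1)) +
          ∑ j' ∈ Finset.univ.map e,
            (B ^ k) r' j' * d ((j'.val : ℤ) - (((k + 1 : ℕ) : ℤ) - 1)) :=
          lt_add_of_pos_left _ hterm
      _ = ∑ j' ∈ insert j0 (Finset.univ.map e),
            (B ^ k) r' j' * d ((j'.val : ℤ) - (((k + 1 : ℕ) : ℤ) - 1)) := by
          rw [Finset.sum_insert hj0]
      _ ≤ g k := by
          refine Finset.sum_le_sum_of_subset_of_nonneg (Finset.subset_univ _) fun j' _ _ =>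
            mul_nonneg (pow_entry_nonneg hB0 k r' j') (hd0 _)
  rw [← hf.tsum_eq, ← hg.tsum_eq]
  exact Summable.tsum_lt_tsum hle hstrict hf.summable hg.summable

/-- `L^(k)_β < L^(k+1)_β` and `M^(k)_β < M^(k+1)_β`. -/
theorem L_M_strict_mono
    (p : ℕ → ℝ) (d : ℤ → ℝ) (β : ℝ) (k : ℕ)
    (hk : 1 ≤ k)
    (hp0 : ∀ n, 0 ≤ p n)
    (hpdec : ∀ n : ℕ, p (n + 1) ≤ p n)
    (hp1 : 0 < p 1)
    (hrow : ∀ i : ℤ, HasSum (fun j : ℤ => p (i - j).natAbs) 1)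
    (hβ : β ∈ Set.Ioo (0 : ℝ) 1)
    (hd0 : ∀ e, 0 ≤ d e)
    (hdeven : ∀ e : ℤ, d e = d (-e))
    (hdinc : ∀ e : ℕ, d (e : ℤ) ≤ d ((e : ℤ) + 1))
    (hdzero : d 0 = 0)
    (hdpos : ∀ e : ℤ, e ≠ 0 → 0 < d e) :
    Lkβ p d β k hk < Lkβ p d β (k + 1) (by omega) ∧
    Mkβ p β k hk < Mkβ p β (k + 1) (by omega) := by
  constructor
  · exact Lk_lt p d β k hk hp0 hp1 hrow hβ hd0 (hdpos (k : ℤ) (by omega))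
  · have h1 : ∀ (k' : ℕ) (hk' : 1 ≤ k'),
        Mkβ p β k' hk' = Lkβ p (fun _ => (1 : ℝ)) β k' hk' := by
      intro k' hk'
      simp [Mkβ, Lkβ]
    rw [h1 k hk, h1 (k + 1) (by omega)]
    exact Lk_lt p (fun _ => (1 : ℝ)) β k hk hp0 hp1 hrow hβ (fun _ => zero_le_one) one_pos
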